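/- For any ŌÜ > 0, x ‚Č• 0 and t > 0, ‚ąö(2/(ŌÄt¬≥)) ‚ąę_0^‚ąě (x+z) exp(-(x+z)¬≤/(2t) + ŌÜz) dz = ‚ąö(2/(ŌÄt)) e^{-x¬≤/(2t)} + 2ŌÜ e^{-ŌÜx + tŌÜ¬≤/2} - ŌÜ ‚ąö(2/(ŌÄt)) ‚ąę_0^‚ąě exp(-(x-z)¬≤/(2t) - ŌÜz) dz, and the last integral is bounded by 1/ŌÜ; hence the left side is at most and asymptotically equivalent to ‚ąö(2/(ŌÄt)) + 2ŌÜ e^{-ŌÜx + tŌÜ¬≤/2} as t ‚Üí ‚ąě. -/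

import Mathlib

open MeasureTheory Real Set Filter
open Topology


section Aux
variable {φ x t : ℝ}

lemma exp_form (hφ : 0 < φ) (ht : 0 < t) (z : ℝ) :
    -(x + z)^2 / (2*t) + φ * z
      = -(1/(2*t)) * (z - (t*φ - x))^2 + (-φ*x + t*φ^2/2) := by
  field_simp
  ring

lemma exp_form' (hφ : 0 < φ) (ht : 0 < t) (z : ℝ) :
    -(x - z)^2 / (2*t) - φ * z
      = -(1/(2*t)) * (z - (x - t*φ))^2 + (-φ*x + t*φ^2/2) := by
  field_simp
  ring

lemma int1 (hφ : 0 < φ) (ht : 0 < t) :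
    Integrable (fun z : ℝ => Real.exp (-(x + z)^2 / (2*t) + φ * z)) := by
  have hb : 0 < 1/(2*t) := by positivity
  have : (fun z : ℝ => Real.exp (-(x + z)^2 / (2*t) + φ * z))
      = fun z => Real.exp (-(1/(2*t)) * (z - (t*φ - x))^2) * Real.exp (-φ*x + t*φ^2/2) := by
    funext z
    rw [← Real.exp_add, exp_form hφ ht]
  rw [this]
  exact ((integrable_exp_neg_mul_sq hb).comp_sub_right _).mul_const _

lemma int2 (hφ : 0 < φ) (ht : 0 < t) :
    Integrable (fun z : ℝ => (x + z) * Real.exp (-(x + z)^2 / (2*t) + φ * z)) := by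
  have hb : 0 < 1/(2*t) := by positivity
  have : (fun z : ℝ => (x + z) * Real.exp (-(x + z)^2 / (2*t) + φ * z))
      = fun z => ((z - (t*φ - x)) * Real.exp (-(1/(2*t)) * (z - (t*φ - x))^2))
            * Real.exp (-φ*x + t*φ^2/2)
          + (t*φ) * (Real.exp (-(1/(2*t)) * (z - (t*φ - x))^2)
            * Real.exp (-φ*x + t*φ^2/2)) := by
    funext z
    rw [show ((z - (t*φ - x)) * Real.exp (-(1/(2*t)) * (z - (t*φ - x))^2))
            * Real.exp (-φ*x + t*φ^2/2)
          + (t*φ) * (Real.exp (-(1/(2*t)) * (z - (t*φ - x))^2)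
            * Real.exp (-φ*x + t*φ^2/2))
        = (x + z) * (Real.exp (-(1/(2*t)) * (z - (t*φ - x))^2)
            * Real.exp (-φ*x + t*φ^2/2)) from by ring,
      ← Real.exp_add, exp_form hφ ht]
  rw [this]
  exact (((integrable_mul_exp_neg_mul_sq hb).comp_sub_right _).mul_const _).add
    ((((integrable_exp_neg_mul_sq hb).comp_sub_right _).mul_const _).const_mul _)

lemma int3 (hφ : 0 < φ) (ht : 0 < t) :
    Integrable (fun z : ℝ => Real.exp (-(x - z)^2 / (2*t) - φ * z)) := by
  have hb : 0 < 1/(2*t) := by positivity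
  have : (fun z : ℝ => Real.exp (-(x - z)^2 / (2*t) - φ * z))
      = fun z => Real.exp (-(1/(2*t)) * (z - (x - t*φ))^2) * Real.exp (-φ*x + t*φ^2/2) := by
    funext z
    rw [← Real.exp_add, exp_form' hφ ht]
  rw [this]
  exact ((integrable_exp_neg_mul_sq hb).comp_sub_right _).mul_const _

lemma gauss_val (hφ : 0 < φ) (ht : 0 < t) :
    (∫ z : ℝ, Real.exp (-(x + z)^2 / (2*t) + φ * z))
      = Real.sqrt (2*π*t) * Real.exp (-φ*x + t*φ^2/2) := by
  have hb : 0 < 1/(2*t) := by positivity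
  have h : (fun z : ℝ => Real.exp (-(x + z)^2 / (2*t) + φ * z))
      = fun z => Real.exp (-(1/(2*t)) * (z - (t*φ - x))^2) * Real.exp (-φ*x + t*φ^2/2) := by
    funext z
    rw [← Real.exp_add, exp_form hφ ht]
  rw [h, integral_mul_const,
    integral_sub_right_eq_self (fun z => Real.exp (-(1/(2*t)) * z^2)) (t*φ - x),
    integral_gaussian]
  congr 2
  field_simp

lemma split_int (hφ : 0 < φ) (ht : 0 < t) :
    (∫ z in Ioi (0:ℝ), Real.exp (-(x + z)^2 / (2*t) + φ * z))
      = Real.sqrt (2*π*t) * Real.exp (-φ*x + t*φ^2/2)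
        - ∫ z in Ioi (0:ℝ), Real.exp (-(x - z)^2 / (2*t) - φ * z) := by
  have h1 := int1 (x := x) hφ ht
  have key : (∫ z in Iic (0:ℝ), Real.exp (-(x + z)^2 / (2*t) + φ * z))
      = ∫ z in Ioi (0:ℝ), Real.exp (-(x - z)^2 / (2*t) - φ * z) := by
    have := integral_comp_neg_Iic (0:ℝ)
      (fun z => Real.exp (-(x - z)^2 / (2*t) - φ * z))
    rw [neg_zero] at this
    rw [← this]
    congr 1
    funext z
    congr 1
    ring
  have := intervalIntegral.integral_Iic_add_Ioi (μ := volume) (b := (0:ℝ)) h1.integrableOn h1.integrableOn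
  rw [key, gauss_val hφ ht] at this
  linarith

lemma ibp (hφ : 0 < φ) (ht : 0 < t) :
    (∫ z in Ioi (0:ℝ), (x + z) * Real.exp (-(x + z)^2 / (2*t) + φ * z))
      = t * Real.exp (-x^2 / (2*t))
        + t * φ * ∫ z in Ioi (0:ℝ), Real.exp (-(x + z)^2 / (2*t) + φ * z) := by
  have ht' : t ≠ 0 := ht.ne'
  set F : ℝ → ℝ := fun z => -t * Real.exp (-(x + z)^2 / (2*t) + φ * z) with hF
  have hderiv : ∀ z ∈ Ici (0:ℝ), HasDerivAt F
      ((x + z) * Real.exp (-(x + z)^2 / (2*t) + φ * z)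
        - t * φ * Real.exp (-(x + z)^2 / (2*t) + φ * z)) z := by
    intro z _
    have h1 : HasDerivAt (fun z : ℝ => (x+z)^2) (2*(x+z)) z := by
      simpa using (((hasDerivAt_id z).const_add x).fun_pow 2)
    have hu : HasDerivAt (fun z : ℝ => -(x+z)^2/(2*t) + φ*z) (φ - (x+z)/t) z := by
      have h2 := (h1.fun_neg.div_const (2*t)).fun_add ((hasDerivAt_id' z).const_mul φ)
      refine h2.congr_deriv ?_
      field_simp
      ring
    have h3 := hu.exp.const_mul (-t)
    refine h3.congr_deriv ?_
    field_simp
    ring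
  have hint : IntegrableOn (fun z : ℝ =>
      (x + z) * Real.exp (-(x + z)^2 / (2*t) + φ * z)
        - t * φ * Real.exp (-(x + z)^2 / (2*t) + φ * z)) (Ioi 0) :=
    ((int2 hφ ht).sub ((int1 hφ ht).const_mul _)).integrableOn
  have htend : Tendsto F atTop (𝓝 0) := by
    have hb : 0 < 1/(2*t) := by positivity
    have hFrw : F = fun z => (-t * Real.exp (-φ*x + t*φ^2/2))
        * Real.exp (-(1/(2*t)) * (z - (t*φ - x))^2) := by
      funext z
      rw [hF]
      simp only
      rw [exp_form hφ ht (x := x), Real.exp_add]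
      ring
    rw [hFrw]
    have h4 : Tendsto (fun z : ℝ => -(1/(2*t)) * (z - (t*φ - x))^2) atTop atBot := by
      apply Tendsto.const_mul_atTop_of_neg (by rw [neg_lt_zero]; positivity)
      exact (tendsto_pow_atTop (by norm_num)).comp
        (tendsto_atTop_add_const_right _ _ tendsto_id)
    have h5 := Real.tendsto_exp_atBot.comp h4
    simpa using h5.const_mul (-t * Real.exp (-φ*x + t*φ^2/2))
  have := integral_Ioi_of_hasDerivAt_of_tendsto' hderiv hint htend
  rw [integral_sub ((int2 hφ ht).integrableOn) (((int1 hφ ht).const_mul _).integrableOn),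
    MeasureTheory.integral_const_mul] at this
  have hF0 : F 0 = -t * Real.exp (-x^2 / (2*t)) := by
    rw [hF]; norm_num
  rw [hF0] at this
  linarith

lemma sqrt1 (ht : 0 < t) : Real.sqrt (2/(π*t^3)) * t = Real.sqrt (2/(π*t)) := by
  have h : Real.sqrt (2/(π*t^3)) * t = Real.sqrt (2/(π*t^3) * t^2) := by
    rw [Real.sqrt_mul (by positivity), Real.sqrt_sq ht.le]
  rw [h]
  congr 1
  have hπ := Real.pi_pos
  field_simp

lemma sqrt2 (ht : 0 < t) : Real.sqrt (2/(π*t^3)) * Real.sqrt (2*π*t) * t = 2 := by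
  have hπ := Real.pi_pos
  rw [← Real.sqrt_mul (by positivity)]
  rw [show 2/(π*t^3) * (2*π*t) = (2/t)^2 by field_simp]
  rw [Real.sqrt_sq (by positivity)]
  field_simp

lemma part1 (hφ : 0 < φ) (ht : 0 < t) :
    Real.sqrt (2 / (π * t^3)) *
        (∫ z in Ioi (0:ℝ), (x + z) * Real.exp (-(x + z)^2 / (2*t) + φ * z))
      = Real.sqrt (2 / (π * t)) * Real.exp (-x^2 / (2*t))
          + 2 * φ * Real.exp (-φ * x + t * φ^2 / 2)
          - φ * Real.sqrt (2 / (π * t)) *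
              ∫ z in Ioi (0:ℝ), Real.exp (-(x - z)^2 / (2*t) - φ * z) := by
  rw [ibp hφ ht, split_int hφ ht]
  have h1 : Real.sqrt (2/(π*t^3)) * t = Real.sqrt (2/(π*t)) := sqrt1 ht
  have h2 : Real.sqrt (2/(π*t^3)) * Real.sqrt (2*π*t) * t = 2 := sqrt2 ht
  linear_combination (Real.exp (-x^2/(2*t))
      - φ * ∫ z in Ioi (0:ℝ), Real.exp (-(x - z)^2 / (2*t) - φ * z)) * h1
    + (φ * Real.exp (-φ*x + t*φ^2/2)) * h2

lemma exp_int_val (hφ : 0 < φ) :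
    (∫ z in Ioi (0:ℝ), Real.exp (-(φ*z))) = 1/φ := by
  have hintexp : IntegrableOn (fun z : ℝ => Real.exp (-(φ*z))) (Ioi 0) := by
    simpa [neg_mul] using exp_neg_integrableOn_Ioi 0 hφ
  have h : (∫ z in Ioi (0:ℝ), Real.exp (-(φ*z))) = 0 - (-(1/φ) * Real.exp (-(φ*0))) := by
    apply integral_Ioi_of_hasDerivAt_of_tendsto' (f := fun z => -(1/φ) * Real.exp (-(φ*z)))
    · intro z _
      have := (((hasDerivAt_id z).const_mul φ).neg.exp).const_mul (-(1/φ))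
      refine this.congr_deriv ?_
      field_simp
      rfl
    · exact hintexp
    · have h1 : Tendsto (fun z : ℝ => φ * z) atTop atTop :=
        Tendsto.const_mul_atTop hφ tendsto_id
      have h2 := Real.tendsto_exp_atBot.comp (tendsto_neg_atTop_atBot.comp h1)
      simpa [Function.comp] using h2.const_mul (-(1/φ))
  rw [h]
  norm_num

lemma part2 (hφ : 0 < φ) (ht : 0 < t) :
    (∫ z in Ioi (0:ℝ), Real.exp (-(x - z)^2 / (2*t) - φ * z)) ≤ 1 / φ := by
  have hintexp : IntegrableOn (fun z : ℝ => Real.exp (-(φ*z))) (Ioi 0) := by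
    simpa [neg_mul] using exp_neg_integrableOn_Ioi 0 hφ
  have hbound : ∀ z ∈ Ioi (0:ℝ),
      Real.exp (-(x - z)^2 / (2*t) - φ * z) ≤ Real.exp (-(φ*z)) := by
    intro z _
    apply Real.exp_le_exp.2
    have h0 : 0 ≤ (x - z)^2 / (2*t) := by positivity
    have : -(x - z)^2 / (2*t) = -((x - z)^2 / (2*t)) := by ring
    rw [this]
    linarith
  have h := setIntegral_mono_on (int3 hφ ht).integrableOn hintexp measurableSet_Ioi hbound
  rw [exp_int_val hφ] at h
  exact h

lemma Knonneg (ht : 0 < t) :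
    0 ≤ ∫ z in Ioi (0:ℝ), Real.exp (-(x - z)^2 / (2*t) - φ * z) :=
  setIntegral_nonneg measurableSet_Ioi (fun z _ => (Real.exp_pos _).le)

lemma Ale1 (ht : 0 < t) : Real.exp (-x^2 / (2*t)) ≤ 1 := by
  apply Real.exp_le_one_iff.2
  have h0 : 0 ≤ x^2 / (2*t) := by positivity
  have : -x^2 / (2*t) = -(x^2 / (2*t)) := by ring
  rw [this]
  linarith

lemma part3 (hφ : 0 < φ) (ht : 0 < t) :
    Real.sqrt (2 / (π * t^3)) *
        (∫ z in Ioi (0:ℝ), (x + z) * Real.exp (-(x + z)^2 / (2*t) + φ * z))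
      ≤ Real.sqrt (2 / (π * t)) + 2 * φ * Real.exp (-φ * x + t * φ^2 / 2) := by
  rw [part1 hφ ht]
  have hs : 0 ≤ Real.sqrt (2/(π*t)) := Real.sqrt_nonneg _
  have hK := Knonneg (x := x) (φ := φ) ht
  have hA := Ale1 (x := x) ht
  have p1 : Real.sqrt (2/(π*t)) * Real.exp (-x^2 / (2*t)) ≤ Real.sqrt (2/(π*t)) :=
    mul_le_of_le_one_right hs hA
  have p2 : 0 ≤ φ * Real.sqrt (2/(π*t)) *
      ∫ z in Ioi (0:ℝ), Real.exp (-(x - z)^2 / (2*t) - φ * z) :=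
    mul_nonneg (mul_nonneg hφ.le hs) hK
  have e : (2:ℝ)/(π*t) = 2/(π*t) := rfl
  linarith [p1, p2]

lemma part4 (hφ : 0 < φ) (hx : 0 ≤ x) :
    Asymptotics.IsEquivalent atTop
      (fun t => Real.sqrt (2 / (π * t^3)) *
          ∫ z in Ioi (0:ℝ), (x + z) * Real.exp (-(x + z)^2 / (2*t) + φ * z))
      (fun t => Real.sqrt (2 / (π * t)) + 2 * φ * Real.exp (-φ * x + t * φ^2 / 2)) := by
  have hπ := Real.pi_pos
  set f : ℝ → ℝ := fun t => Real.sqrt (2 / (π * t^3)) *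
      ∫ z in Ioi (0:ℝ), (x + z) * Real.exp (-(x + z)^2 / (2*t) + φ * z) with hf
  set g : ℝ → ℝ := fun t => Real.sqrt (2 / (π * t))
      + 2 * φ * Real.exp (-φ * x + t * φ^2 / 2) with hg
  have hgpos : ∀ t : ℝ, 0 < g t := by
    intro t
    have h1 : 0 < 2 * φ * Real.exp (-φ * x + t * φ^2 / 2) := by positivity
    have h2 := Real.sqrt_nonneg (2 / (π * t))
    simp only [hg]
    linarith
  rw [Asymptotics.IsEquivalent, Asymptotics.isLittleO_iff_tendsto
      (fun t h => absurd h (hgpos t).ne')]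
  apply squeeze_zero_norm'
    (a := fun t => (Real.sqrt (2/π)/φ) * Real.exp (φ*x - t*φ^2/2))
  · filter_upwards [eventually_ge_atTop (1:ℝ)] with t ht1
    have ht : (0:ℝ) < t := lt_of_lt_of_le one_pos ht1
    set K := ∫ z in Ioi (0:ℝ), Real.exp (-(x - z)^2 / (2*t) - φ * z) with hK
    set s1 := Real.sqrt (2/(π*t)) with hs1
    set C := Real.exp (-φ * x + t * φ^2 / 2) with hC
    have hCne : C ≠ 0 := (Real.exp_pos _).ne'
    have hs : 0 ≤ s1 := Real.sqrt_nonneg _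
    have hK0 : 0 ≤ K := Knonneg ht
    have hK1 : K ≤ 1/φ := part2 hφ ht
    have hA1 := Ale1 (x := x) ht
    have e1 : f t - g t = s1 * Real.exp (-x^2 / (2*t)) - s1 - φ * s1 * K := by
      simp only [hf, hg]
      rw [part1 hφ ht, ← hK, ← hs1, ← hC]
      ring
    have p4 : φ * s1 * K ≤ s1 := by
      have h := mul_le_mul_of_nonneg_left hK1 (mul_nonneg hφ.le hs)
      have h2 : φ * s1 * (1/φ) = s1 := by field_simp
      calc φ * s1 * K ≤ φ * s1 * (1/φ) := h
        _ = s1 := h2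
    have hsa : s1 * Real.exp (-x^2/(2*t)) ≤ s1 := mul_le_of_le_one_right hs hA1
    have hs0 : 0 ≤ s1 * Real.exp (-x^2/(2*t)) := by positivity
    have hp0 : 0 ≤ φ * s1 * K := by positivity
    have habs : |f t - g t| ≤ 2 * s1 :=
      abs_le.2 ⟨by rw [e1]; linarith, by rw [e1]; linarith⟩
    have hs1le : s1 ≤ Real.sqrt (2/π) := by
      apply Real.sqrt_le_sqrt
      rw [div_le_div_iff₀ (by positivity) (by positivity)]
      nlinarith
    have hnum : |f t - g t| ≤ 2 * Real.sqrt (2/π) := habs.trans (by linarith)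
    have hgge : 2*φ*C ≤ g t := by
      simp only [hg]
      rw [← hs1, ← hC]
      linarith
    calc ‖(f - g) t / g t‖ = |f t - g t| / |g t| := by
          rw [Real.norm_eq_abs, abs_div, Pi.sub_apply]
      _ = |f t - g t| / g t := by rw [abs_of_pos (hgpos t)]
      _ ≤ (2*Real.sqrt (2/π)) / (2*φ*C) :=
          div_le_div₀ (by positivity) hnum (by positivity) hgge
      _ = (Real.sqrt (2/π)/φ) * Real.exp (φ*x - t*φ^2/2) := by
          rw [show φ*x - t*φ^2/2 = -(-φ*x + t*φ^2/2) by ring, Real.exp_neg, ← hC]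
          field_simp
  · have h1 : Tendsto (fun t : ℝ => -(φ^2/2)*t + φ*x) atTop atBot :=
      tendsto_atBot_add_const_right _ _
        (Tendsto.const_mul_atTop_of_neg (by rw [neg_lt_zero]; positivity) tendsto_id)
    have h2 := Real.tendsto_exp_atBot.comp h1
    have h3 := h2.const_mul (Real.sqrt (2/π)/φ)
    rw [mul_zero] at h3
    apply h3.congr
    intro s
    simp only [Function.comp]
    rw [show -(φ^2/2)*s + φ*x = φ*x - s*φ^2/2 from by ring]

end Aux

/-- For any `φ > 0`, `x ≥ 0` and `t > 0`,
`√(2/(πt³)) ∫_0^∞ (x+z) exp(-(x+z)²/(2t) + φz) dz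
  = √(2/(πt)) e^{-x²/(2t)} + 2φ e^{-φx + tφ²/2} - φ √(2/(πt)) ∫_0^∞ exp(-(x-z)²/(2t) - φz) dz`,
the last integral is bounded by `1/φ`; hence the left side is at most and asymptotically
equivalent to `√(2/(πt)) + 2φ e^{-φx + tφ²/2}` as `t → ∞`. -/
theorem stmt_12 (φ x : ℝ) (hφ : 0 < φ) (hx : 0 ≤ x) :
    (∀ t : ℝ, 0 < t →
      Real.sqrt (2 / (π * t^3)) *
          (∫ z in Ioi (0:ℝ), (x + z) * Real.exp (-(x + z)^2 / (2*t) + φ * z))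
        = Real.sqrt (2 / (π * t)) * Real.exp (-x^2 / (2*t))
            + 2 * φ * Real.exp (-φ * x + t * φ^2 / 2)
            - φ * Real.sqrt (2 / (π * t)) *
                ∫ z in Ioi (0:ℝ), Real.exp (-(x - z)^2 / (2*t) - φ * z)) ∧
    (∀ t : ℝ, 0 < t →
      (∫ z in Ioi (0:ℝ), Real.exp (-(x - z)^2 / (2*t) - φ * z)) ≤ 1 / φ) ∧
    (∀ t : ℝ, 0 < t →
      Real.sqrt (2 / (π * t^3)) *
          (∫ z in Ioi (0:ℝ), (x + z) * Real.exp (-(x + z)^2 / (2*t) + φ * z))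
        ≤ Real.sqrt (2 / (π * t)) + 2 * φ * Real.exp (-φ * x + t * φ^2 / 2)) ∧
    Asymptotics.IsEquivalent atTop
      (fun t => Real.sqrt (2 / (π * t^3)) *
          ∫ z in Ioi (0:ℝ), (x + z) * Real.exp (-(x + z)^2 / (2*t) + φ * z))
      (fun t => Real.sqrt (2 / (π * t)) + 2 * φ * Real.exp (-φ * x + t * φ^2 / 2)) := by
  exact ⟨fun t ht => part1 hφ ht, fun t ht => part2 hφ ht,
    fun t ht => part3 hφ ht, part4 hφ hx⟩
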